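/- For all real numbers φ and φ_l, cos φ ≥ -((φ - φ_l + sin φ_l)²)/2 + cos φ_l + (sin² φ_l)/2. -/

import Mathlib

open Real Set

lemma sin_sub_sin_le_abs (x y : ℝ) : Real.sin x - Real.sin y ≤ |x - y| := by
  rw [Real.sin_sub_sin]
  calc 2 * Real.sin ((x - y) / 2) * Real.cos ((x + y) / 2)
      ≤ |2 * Real.sin ((x - y) / 2) * Real.cos ((x + y) / 2)| := le_abs_self _
    _ = 2 * |Real.sin ((x - y) / 2)| * |Real.cos ((x + y) / 2)| := by
        rw [abs_mul, abs_mul]; norm_num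
    _ ≤ 2 * |(x - y) / 2| * 1 := by
        have h1 : |Real.sin ((x - y) / 2)| ≤ |(x - y) / 2| := Real.abs_sin_le_abs
        have h2 : |Real.cos ((x + y) / 2)| ≤ 1 := Real.abs_cos_le_one _
        have h3 : (0:ℝ) ≤ |Real.sin ((x - y) / 2)| := abs_nonneg _
        have h4 : (0:ℝ) ≤ |Real.cos ((x + y) / 2)| := abs_nonneg _
        nlinarith
    _ = |x - y| := by rw [abs_div]; norm_num; ring

lemma cos_key (a t : ℝ) :
    Real.cos (a + t) ≥ Real.cos a - t * Real.sin a - t ^ 2 / 2 := by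
  set f : ℝ → ℝ := fun t => Real.cos (a + t) + t * Real.sin a + t ^ 2 / 2 with hf
  have hderiv : ∀ x : ℝ, HasDerivAt f (-Real.sin (a + x) + Real.sin a + x) x := by
    intro x
    have h1 : HasDerivAt (fun t : ℝ => Real.cos (a + t)) (-Real.sin (a + x)) x := by
      have := (Real.hasDerivAt_cos (a + x)).comp x
        ((hasDerivAt_const x a).add (hasDerivAt_id x))
      simpa [Function.comp_def] using this
    have h2 : HasDerivAt (fun t : ℝ => t * Real.sin a) (Real.sin a) x := by
      simpa using (hasDerivAt_id x).mul_const (Real.sin a)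
    have h3 : HasDerivAt (fun t : ℝ => t ^ 2 / 2) x x := by
      have := (hasDerivAt_pow 2 x).div_const 2
      simpa using this
    exact (h1.add h2).add h3
  have hcont : Continuous f := by
    apply Continuous.add
    apply Continuous.add
    · exact (Real.continuous_cos.comp (continuous_const.add continuous_id))
    · exact continuous_id.mul continuous_const
    · exact (continuous_pow 2).div_const 2
  have hmono : MonotoneOn f (Ici (0:ℝ)) := by
    apply monotoneOn_of_deriv_nonneg (convex_Ici 0) hcont.continuousOn
    · intro x hx
      exact (hderiv x).differentiableAt.differentiableWithinAt
    · intro x hx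
      rw [interior_Ici] at hx
      rw [(hderiv x).deriv]
      have h := sin_sub_sin_le_abs (a + x) a
      rw [show a + x - a = x by ring, abs_of_pos hx] at h
      linarith
  have hanti : AntitoneOn f (Iic (0:ℝ)) := by
    apply antitoneOn_of_deriv_nonpos (convex_Iic 0) hcont.continuousOn
    · intro x hx
      exact (hderiv x).differentiableAt.differentiableWithinAt
    · intro x hx
      rw [interior_Iic] at hx
      rw [(hderiv x).deriv]
      have h := sin_sub_sin_le_abs a (a + x)
      rw [show a - (a + x) = -x by ring, abs_neg, abs_of_neg hx] at h
      linarith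
  have hge : f t ≥ f 0 := by
    rcases le_or_gt 0 t with h | h
    · exact hmono (Set.mem_Ici.mpr le_rfl) h h
    · exact hanti h.le (Set.mem_Iic.mpr le_rfl) h.le
  simp only [hf] at hge
  norm_num at hge
  linarith

theorem cos_quadratic_surrogate (φ φl : ℝ) :
    Real.cos φ ≥ -((φ - φl + Real.sin φl) ^ 2) / 2 + Real.cos φl + (Real.sin φl) ^ 2 / 2 := by
  have h := cos_key φl (φ - φl)
  rw [show φl + (φ - φl) = φ by ring] at h
  nlinarith [h]
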